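/- In G = ⟨a,t | t² = 1, atat = tata⟩, for all integers m, n the equality t·aⁿ·t·aᵐ·t = aᵐ·t·aⁿ holds in G; hence the word t aⁿ t aᵐ t (of length |n|+|m|+3) is not geodesic, as it equals a word of length |n|+|m|+1. -/

import Mathlib

/-- The relators of the presentation ⟨a,t | t² = 1, atat = tata⟩,
with generator 0 ↦ a and generator 1 ↦ t. -/
def myRels : Set (FreeGroup (Fin 2)) :=
  { FreeGroup.of 1 * FreeGroup.of 1,
    FreeGroup.of 0 * FreeGroup.of 1 * FreeGroup.of 0 * FreeGroup.of 1 *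
      (FreeGroup.of 1 * FreeGroup.of 0 * FreeGroup.of 1 * FreeGroup.of 0)⁻¹ }

/-- The group G = ⟨a,t | t² = 1, atat = tata⟩. -/
abbrev PG := PresentedGroup myRels

/-- The generator a of G. -/
def pa : PG := PresentedGroup.of 0

/-- The generator t of G. -/
def pt : PG := PresentedGroup.of 1

/-- The generating set A = {a, a⁻¹, t, t⁻¹} of G. -/
def GenSet : Set PG := {pa, pa⁻¹, pt, pt⁻¹}

/-- `w` is a word over the alphabet A. -/
def IsWord (w : List PG) : Prop := ∀ x ∈ w, x ∈ GenSet

/-- `w` is a word over A representing the group element `g`. -/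
def Represents (w : List PG) (g : PG) : Prop := IsWord w ∧ w.prod = g

open Classical in
/-- The number of t-letters of a word (occurrences of t and t⁻¹). -/
noncomputable def tCount (w : List PG) : ℕ :=
  w.countP (fun x => decide (x = pt ∨ x = pt⁻¹))

/-- The word aˣ over A: x letters `a` if x ≥ 0, |x| letters `a⁻¹` if x < 0. -/
def apow (x : ℤ) : List PG :=
  if 0 ≤ x then List.replicate x.toNat pa else List.replicate (-x).toNat pa⁻¹

/-- A word over A is geodesic if no strictly shorter word over A represents
the same element. -/
def IsGeodesic (w : List PG) : Prop :=
  IsWord w ∧ ∀ v : List PG, IsWord v → v.prod = w.prod → w.length ≤ v.length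

lemma rel_one {r : FreeGroup (Fin 2)} (hr : r ∈ myRels) : (QuotientGroup.mk r : PG) = 1 := by
  rw [QuotientGroup.eq_one_iff]
  exact Subgroup.subset_normalClosure hr

lemma pt_sq : pt * pt = 1 := by
  have h := rel_one (show FreeGroup.of 1 * FreeGroup.of 1 ∈ myRels by left; rfl)
  simp [pt, PresentedGroup.of, QuotientGroup.mk_mul] at h ⊢; exact h

lemma pt_inv : pt⁻¹ = pt := by
  rw [inv_eq_iff_mul_eq_one]; exact pt_sq

lemma rel2 : pa * pt * pa * pt = pt * pa * pt * pa := by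
  have h := rel_one (show FreeGroup.of 0 * FreeGroup.of 1 * FreeGroup.of 0 * FreeGroup.of 1 *
      (FreeGroup.of 1 * FreeGroup.of 0 * FreeGroup.of 1 * FreeGroup.of 0)⁻¹ ∈ myRels by
    right; rfl)
  have h' : (pa * pt * pa * pt) * (pt * pa * pt * pa)⁻¹ = 1 := by
    simp [pa, pt, PresentedGroup.of, QuotientGroup.mk_mul] at h ⊢; exact h
  rw [mul_inv_eq_one] at h'
  exact h'

lemma comm_s : Commute pa (pt * pa * pt) := by
  have h := rel2
  unfold Commute SemiconjBy
  simp only [mul_assoc] at h ⊢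
  exact h

lemma conj_n (k : ℤ) : pt * pa ^ k * pt = (pt * pa * pt) ^ k := by
  have h : pt * pa * pt = pt * pa * pt⁻¹ := by rw [pt_inv]
  rw [h, conj_zpow, pt_inv]

lemma main_id (m n : ℤ) : pt * pa ^ n * pt * pa ^ m * pt = pa ^ m * pt * pa ^ n := by
  have hc : Commute (pa ^ m) ((pt * pa * pt) ^ n) := (comm_s.zpow_zpow m n)
  calc pt * pa ^ n * pt * pa ^ m * pt = (pt * pa ^ n * pt) * pa ^ m * pt := by
        simp [mul_assoc]
    _ = (pt * pa * pt) ^ n * pa ^ m * pt := by rw [conj_n]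
    _ = pa ^ m * (pt * pa * pt) ^ n * pt := by rw [hc.symm.eq]
    _ = pa ^ m * (pt * pa ^ n * pt) * pt := by rw [conj_n]
    _ = pa ^ m * pt * pa ^ n * (pt * pt) := by simp [mul_assoc]
    _ = pa ^ m * pt * pa ^ n := by rw [pt_sq, mul_one]

lemma apow_length (x : ℤ) : (apow x).length = x.natAbs := by
  unfold apow; split <;> simp <;> omega

lemma apow_prod (x : ℤ) : (apow x).prod = pa ^ x := by
  unfold apow
  split
  · rename_i h
    rw [List.prod_replicate, ← zpow_natCast, Int.toNat_of_nonneg h]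
  · rename_i h
    rw [List.prod_replicate, ← zpow_natCast, Int.toNat_of_nonneg (by omega), inv_zpow,
      ← zpow_neg, neg_neg]

lemma apow_word (x : ℤ) : IsWord (apow x) := by
  intro y hy
  unfold apow at hy
  split at hy <;> simp only [List.mem_replicate] at hy <;> rw [hy.2] <;>
    simp [GenSet]

/-- In G, for all integers m, n we have t·aⁿ·t·aᵐ·t = aᵐ·t·aⁿ; hence the word
t aⁿ t aᵐ t, of length |n|+|m|+3, is not geodesic, as it equals a word of
length |n|+|m|+1. -/
theorem t_an_t_am_t_not_geodesic (m n : ℤ) :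
    pt * pa ^ n * pt * pa ^ m * pt = pa ^ m * pt * pa ^ n ∧
    ([pt] ++ apow n ++ [pt] ++ apow m ++ [pt]).length = n.natAbs + m.natAbs + 3 ∧
    (apow m ++ [pt] ++ apow n).length = n.natAbs + m.natAbs + 1 ∧
    (apow m ++ [pt] ++ apow n).prod = ([pt] ++ apow n ++ [pt] ++ apow m ++ [pt]).prod ∧
    ¬ IsGeodesic ([pt] ++ apow n ++ [pt] ++ apow m ++ [pt]) := by
  have hid := main_id m n
  have hlen1 : ([pt] ++ apow n ++ [pt] ++ apow m ++ [pt]).length = n.natAbs + m.natAbs + 3 := by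
    simp [apow_length]; omega
  have hlen2 : (apow m ++ [pt] ++ apow n).length = n.natAbs + m.natAbs + 1 := by
    simp [apow_length]; omega
  have hp1 : ([pt] ++ apow n ++ [pt] ++ apow m ++ [pt]).prod = pt * pa ^ n * pt * pa ^ m * pt := by
    simp [apow_prod, mul_assoc]
  have hp2 : (apow m ++ [pt] ++ apow n).prod = pa ^ m * pt * pa ^ n := by
    simp [apow_prod, mul_assoc]
  have hprod : (apow m ++ [pt] ++ apow n).prod = ([pt] ++ apow n ++ [pt] ++ apow m ++ [pt]).prod := by
    rw [hp1, hp2, hid]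
  refine ⟨hid, hlen1, hlen2, hprod, ?_⟩
  rintro ⟨-, hgeo⟩
  have hw : IsWord (apow m ++ [pt] ++ apow n) := by
    intro x hx
    simp only [List.mem_append, List.mem_singleton] at hx
    rcases hx with (hx | rfl) | hx
    · exact apow_word m x hx
    · simp [GenSet]
    · exact apow_word n x hx
  have := hgeo _ hw hprod
  rw [hlen1, hlen2] at this
  omega
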